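/- Let $M$ be a $2d$-dimensional symplectic vector space over a field $k$ of characteristic $\neq 2$, and $R, N, L$ pairwise transverse lagrangian subspaces (i.e. $R \cap N = N \cap L = R \cap L = 0$). Define isomorphisms: $\epsilon_0: L \to R$ sending $l$ to the unique $r \in R$ with $r \equiv l \bmod N$; $\epsilon_1: N \to R$ sending $n$ to the unique $r \in R$ with $r \equiv n \bmod L$; and $\epsilon_2: L \to N$ sending $l$ to the unique $n \in N$ with $n \equiv l \bmod R$. Then on top exterior powers, $\operatorname{id}_{\det N} \otimes \det(\epsilon_0) = (-1)^d\, \det(\epsilon_1) \otimes \det(\epsilon_2)$ as maps $\det N \otimes \det L \to \det R \otimes \det N$. -/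

import Mathlib

/-!
STATEMENT 2.  Let `M` be a `2d`-dimensional symplectic vector space over a
field `k` of characteristic `≠ 2`, and `R, N, L` pairwise transverse
lagrangians.  Define the isomorphisms `ε₀ : L → R` (`ε₀ l ≡ l mod N`),
`ε₁ : N → R` (`ε₁ n ≡ n mod L`), `ε₂ : L → N` (`ε₂ l ≡ l mod R`).  Then on top
exterior powers `id_{det N} ⊗ det ε₀ = (-1)^d det ε₁ ⊗ det ε₂` as maps
`det N ⊗ det L → det R ⊗ det N`.  We express the equality of these two maps on
the decomposable generators `(n₁∧…∧n_d) ⊗ (l₁∧…∧l_d)` of `det N ⊗ det L`,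
using `ExteriorAlgebra.ιMulti` for wedge products (which span `⋀^d`).
-/

open TensorProduct

lemma wedge_eq_det_smul {k V : Type*} [Field k] [AddCommGroup V] [Module k V]
    {d : ℕ} (b : Module.Basis (Fin d) k V) (v : Fin d → V) :
    ExteriorAlgebra.ιMulti k d v
      = b.det v • ExteriorAlgebra.ιMulti k d b := by
  have h : (ExteriorAlgebra.ιMulti k d : V [⋀^Fin d]→ₗ[k] ExteriorAlgebra k V)
      = (LinearMap.toSpanSingleton k _ (ExteriorAlgebra.ιMulti k d b)).compAlternatingMap
          b.det := by
    apply Module.Basis.ext_alternating b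
    intro w hw
    have hwb : Function.Bijective w := Finite.injective_iff_bijective.mp hw
    set σ : Equiv.Perm (Fin d) := Equiv.ofBijective w hwb with hσ
    have hwσ : (fun i => b (w i)) = b ∘ σ := by
      funext i; simp [hσ, Equiv.ofBijective_apply]
    rw [hwσ, AlternatingMap.map_perm]
    simp [AlternatingMap.map_perm, Module.Basis.det_self]
  calc ExteriorAlgebra.ιMulti k d v
      = ((LinearMap.toSpanSingleton k _ (ExteriorAlgebra.ιMulti k d b)).compAlternatingMap
          b.det) v := by rw [← h]
    _ = b.det v • ExteriorAlgebra.ιMulti k d b := rfl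

set_option maxHeartbeats 1600000 in
set_option synthInstance.maxHeartbeats 400000 in
theorem statement2 {k M : Type*} [Field k] (h2 : (2 : k) ≠ 0)
    [AddCommGroup M] [Module k M] [FiniteDimensional k M]
    (d : ℕ) (hdim : Module.finrank k M = 2 * d)
    (ω : M →ₗ[k] M →ₗ[k] k)
    (halt : ∀ m : M, ω m m = 0)
    (hnd : ∀ m : M, (∀ m' : M, ω m m' = 0) → m = 0)
    (R N L : Submodule k M)
    (hR : LinearMap.BilinForm.orthogonal ω R = R)
    (hN : LinearMap.BilinForm.orthogonal ω N = N)
    (hL : LinearMap.BilinForm.orthogonal ω L = L)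
    (hRN : R ⊓ N = ⊥) (hNL : N ⊓ L = ⊥) (hRL : R ⊓ L = ⊥)
    (ε₀ : ↥L →ₗ[k] ↥R) (hε₀ : ∀ l : ↥L, (↑(ε₀ l) : M) - ↑l ∈ N)
    (ε₁ : ↥N →ₗ[k] ↥R) (hε₁ : ∀ n : ↥N, (↑(ε₁ n) : M) - ↑n ∈ L)
    (ε₂ : ↥L →ₗ[k] ↥N) (hε₂ : ∀ l : ↥L, (↑(ε₂ l) : M) - ↑l ∈ R) :
    ∀ (n : Fin d → ↥N) (l : Fin d → ↥L),
      (ExteriorAlgebra.ιMulti k d (fun i => ε₀ (l i)))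
          ⊗ₜ[k] (ExteriorAlgebra.ιMulti k d n)
        = ((-1 : k)) ^ d •
          ((ExteriorAlgebra.ιMulti k d (fun i => ε₁ (n i)))
            ⊗ₜ[k] (ExteriorAlgebra.ιMulti k d (fun i => ε₂ (l i)))) := by
  intro n l
  classical
  -- ω is alternating hence reflexive, and nondegenerate
  have hAlt : (ω : LinearMap.BilinForm k M).IsAlt := halt
  have hRefl : (ω : LinearMap.BilinForm k M).IsRefl := hAlt.isRefl
  have hNd : LinearMap.BilinForm.Nondegenerate (ω : LinearMap.BilinForm k M) :=
    ⟨fun m hm => hnd m hm, fun m hm => hnd m fun m' => hRefl _ _ (hm m')⟩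
  -- finrank N = d
  have hdN : Module.finrank k ↥N = d := by
    have h1 := LinearMap.BilinForm.finrank_add_finrank_orthogonal hRefl (B := ω) N
    rw [hN, LinearMap.BilinForm.orthogonal_top_eq_bot hNd, inf_bot_eq] at h1
    simp only [finrank_bot, add_zero, hdim] at h1
    omega
  obtain ⟨b⟩ : Nonempty (Module.Basis (Fin d) k ↥N) :=
    ⟨Module.finBasisOfFinrankEq k ↥N hdN⟩
  -- Step 1: ε₂ l = l - ε₀ l in M
  have e1 : ∀ l : ↥L, (↑(ε₂ l) : M) = ↑l - ↑(ε₀ l) := by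
    intro l
    have hx : ((↑(ε₂ l) : M) - (↑l - ↑(ε₀ l))) ∈ R ⊓ N := by
      refine Submodule.mem_inf.mpr ⟨?_, ?_⟩
      · have := hε₂ l
        have : ((↑(ε₂ l) : M) - ↑l) + ↑(ε₀ l) ∈ R := R.add_mem this (ε₀ l).2
        convert this using 1; abel
      · have : ((↑(ε₂ l) : M)) + (↑(ε₀ l) - ↑l) ∈ N := N.add_mem (ε₂ l).2 (hε₀ l)
        convert this using 1; abel
    rw [hRN] at hx
    have := Submodule.mem_bot k |>.mp hx
    linear_combination (norm := module) this
  -- Step 2: ε₁ (ε₂ l) = - ε₀ l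
  have e2 : ∀ l : ↥L, ε₁ (ε₂ l) = - ε₀ l := by
    intro l
    have hx : ((↑(ε₁ (ε₂ l)) : M) + ↑(ε₀ l)) ∈ R ⊓ L := by
      constructor
      · exact R.add_mem (ε₁ (ε₂ l)).2 (ε₀ l).2
      · have h1 : ((↑(ε₁ (ε₂ l)) : M) - ↑(ε₂ l)) ∈ L := hε₁ (ε₂ l)
        have h2 : ((↑(ε₁ (ε₂ l)) : M) - ↑(ε₂ l)) + ↑l ∈ L := L.add_mem h1 l.2
        have : ((↑(ε₁ (ε₂ l)) : M) + ↑(ε₀ l)) = ((↑(ε₁ (ε₂ l)) : M) - ↑(ε₂ l)) + ↑l := by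
          rw [e1 l]; abel
        rw [this]; exact h2
    rw [hRL] at hx
    have hx0 := Submodule.mem_bot k |>.mp hx
    ext
    have : (↑(ε₁ (ε₂ l)) : M) = -(↑(ε₀ l) : M) := by
      linear_combination (norm := module) hx0
    simpa using this
  -- Abbreviations
  set β : k := b.det n with hβ
  set γ : k := b.det (fun i => ε₂ (l i)) with hγ
  have hn : ExteriorAlgebra.ιMulti k d n = β • ExteriorAlgebra.ιMulti k d b :=
    wedge_eq_det_smul b n
  have hl2 : ExteriorAlgebra.ιMulti k d (fun i => ε₂ (l i))
      = γ • ExteriorAlgebra.ιMulti k d b := wedge_eq_det_smul b _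
  -- the wedge of ε₀ ∘ l
  have hc : (fun i => ε₀ (l i)) = fun i => (-1 : k) • (ε₁ (ε₂ (l i))) := by
    funext i; rw [e2 (l i)]; module
  have h0 : ExteriorAlgebra.ιMulti k d (fun i => ε₀ (l i))
      = (-1 : k) ^ d • ExteriorAlgebra.ιMulti k d (fun i => ε₁ (ε₂ (l i))) := by
    rw [hc]
    have := MultilinearMap.map_smul_univ
        (ExteriorAlgebra.ιMulti k d (M := ↥R)).toMultilinearMap (fun _ => (-1 : k))
        (fun i => ε₁ (ε₂ (l i)))
    simpa using this
  have h12 : ExteriorAlgebra.ιMulti k d (fun i => ε₁ (ε₂ (l i)))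
      = γ • ExteriorAlgebra.ιMulti k d (fun i => ε₁ (b i)) :=
    calc ExteriorAlgebra.ιMulti k d (fun i => ε₁ (ε₂ (l i)))
        = (ExteriorAlgebra.map ε₁).toLinearMap
            (ExteriorAlgebra.ιMulti k d (fun i => ε₂ (l i))) :=
          (ExteriorAlgebra.map_apply_ιMulti ε₁ _).symm
      _ = γ • (ExteriorAlgebra.map ε₁).toLinearMap (ExteriorAlgebra.ιMulti k d b) := by
          rw [hl2, LinearMap.map_smul]
      _ = γ • ExteriorAlgebra.ιMulti k d (fun i => ε₁ (b i)) := by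
          rw [show ((ExteriorAlgebra.map ε₁).toLinearMap (ExteriorAlgebra.ιMulti k d ⇑b))
            = ExteriorAlgebra.ιMulti k d (fun i => ε₁ (b i)) from
            ExteriorAlgebra.map_apply_ιMulti ε₁ ⇑b]
  have h1n : ExteriorAlgebra.ιMulti k d (fun i => ε₁ (n i))
      = β • ExteriorAlgebra.ιMulti k d (fun i => ε₁ (b i)) :=
    calc ExteriorAlgebra.ιMulti k d (fun i => ε₁ (n i))
        = (ExteriorAlgebra.map ε₁).toLinearMap (ExteriorAlgebra.ιMulti k d n) :=
          (ExteriorAlgebra.map_apply_ιMulti ε₁ _).symm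
      _ = β • (ExteriorAlgebra.map ε₁).toLinearMap (ExteriorAlgebra.ιMulti k d b) := by
          rw [hn, LinearMap.map_smul]
      _ = β • ExteriorAlgebra.ιMulti k d (fun i => ε₁ (b i)) := by
          rw [show ((ExteriorAlgebra.map ε₁).toLinearMap (ExteriorAlgebra.ιMulti k d ⇑b))
            = ExteriorAlgebra.ιMulti k d (fun i => ε₁ (b i)) from
            ExteriorAlgebra.map_apply_ιMulti ε₁ ⇑b]
  rw [h0, h12, hn, h1n, hl2]
  rw [smul_smul, smul_tmul', tmul_smul, smul_smul, smul_tmul', tmul_smul, smul_smul]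
  congr 1
  rw [smul_smul]
  ring
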